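/- Let n ≥ 1 and let q_i(λ) = (−1)^i Σ_{1≤s_1<…<s_i≤n} λ_{s_1}⋯λ_{s_i} (i = 1,…,n) be the Viète polynomials of λ = (λ_1,…,λ_n) ∈ ℝ^n. Then for all r, s ∈ {1,…,n} and all λ ∈ ℝ^n one has Σ_{i=1}^{n} (∂q_i/∂λ_r)(λ) · λ_s^{n−i} = −δ_{rs} · Π_{j≠r} (λ_r − λ_j). In particular, for pairwise distinct λ_1,…,λ_n this exhibits the inverse of the Vandermonde matrix (λ_r^{n−i})_{i,r}. -/

import Mathlib

open Polynomial


open scoped BigOperators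

/-- The Viète polynomials: `vieta n lam i` is
`q_{i+1}(λ) = (-1)^{i+1} ∑_{s_1<…<s_{i+1}} λ_{s_1}⋯λ_{s_{i+1}}` (0-based index `i`). -/
noncomputable def vieta (n : ℕ) (lam : Fin n → ℝ) (i : Fin n) : ℝ :=
  (-1 : ℝ) ^ ((i : ℕ) + 1) *
    ∑ s ∈ (Finset.univ : Finset (Fin n)).powersetCard ((i : ℕ) + 1), ∏ j ∈ s, lam j

/-- Partial derivative of `f : ℝ^n → ℝ` with respect to the `r`-th coordinate at `x`. -/
noncomputable def pderiv' (n : ℕ) (f : (Fin n → ℝ) → ℝ) (r : Fin n) (x : Fin n → ℝ) : ℝ :=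
  deriv (fun t => f (Function.update x r t)) (x r)

/-- `Δ_r(λ) = ∏_{j ≠ r} (λ_r − λ_j)`. -/
noncomputable def Delta (n : ℕ) (lam : Fin n → ℝ) (r : Fin n) : ℝ :=
  ∏ j ∈ Finset.univ.erase r, (lam r - lam j)

lemma prod_sub_eq_sum_esymm {ι : Type*} (A : Finset ι) (f : ι → ℝ) (x : ℝ) :
    ∏ j ∈ A, (x - f j) =
      ∑ k ∈ Finset.range (A.card + 1),
        (-1 : ℝ) ^ k * (∑ t ∈ A.powersetCard k, ∏ j ∈ t, f j) * x ^ (A.card - k) := by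
  have h := Multiset.prod_X_sub_X_eq_sum_esymm (A.val.map f)
  have h2 := congrArg (Polynomial.eval x) h
  simp only [Multiset.map_map, Polynomial.eval_multiset_prod, Polynomial.eval_finset_sum,
    Polynomial.eval_mul, Polynomial.eval_pow, Polynomial.eval_C, Polynomial.eval_X,
    Polynomial.eval_neg, Polynomial.eval_one, Multiset.card_map] at h2
  rw [Finset.prod_eq_multiset_prod]
  convert h2 using 2 with k hk
  · rfl
  · congr 1; funext j; simp [Function.comp, Polynomial.eval_sub]
  · rfl
  · rw [Finset.esymm_map_val, Finset.card_val]
    ring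

lemma sum_prod_update (n : ℕ) (lam : Fin n → ℝ) (r : Fin n) (i : ℕ) (t : ℝ) :
    ∑ S ∈ (Finset.univ : Finset (Fin n)).powersetCard (i + 1),
        ∏ j ∈ S, Function.update lam r t j
      = (∑ S ∈ (Finset.univ.erase r).powersetCard (i + 1), ∏ j ∈ S, lam j)
        + t * ∑ S ∈ (Finset.univ.erase r).powersetCard i, ∏ j ∈ S, lam j := by
  have hu : (Finset.univ : Finset (Fin n)) = insert r (Finset.univ.erase r) := by
    simp [Finset.insert_erase]
  have hdisj : Disjoint ((Finset.univ.erase r).powersetCard (i + 1))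
      (((Finset.univ.erase r).powersetCard i).image (insert r)) := by
    rw [Finset.disjoint_left]
    intro S hS hS'
    have hrS : r ∉ S := fun h =>
      Finset.notMem_erase r _ ((Finset.mem_powersetCard.mp hS).1 h)
    obtain ⟨T, _, rfl⟩ := Finset.mem_image.mp hS'
    exact hrS (Finset.mem_insert_self r T)
  conv_lhs => rw [hu, Finset.powersetCard_succ_insert (Finset.notMem_erase r _),
    Finset.sum_union hdisj]
  congr 1
  · refine Finset.sum_congr rfl fun S hS => ?_
    refine Finset.prod_congr rfl fun j hj => ?_
    have hr : j ≠ r := by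
      have := (Finset.mem_powersetCard.mp hS).1 hj
      exact Finset.ne_of_mem_erase this
    simp [Function.update_of_ne hr]
  · have hinj : ∀ S ∈ (Finset.univ.erase r).powersetCard i,
        ∀ T ∈ (Finset.univ.erase r).powersetCard i, insert r S = insert r T → S = T := by
      intro S hS T hT hST
      have hrS : r ∉ S := fun h =>
        Finset.notMem_erase r _ ((Finset.mem_powersetCard.mp hS).1 h)
      have hrT : r ∉ T := fun h =>
        Finset.notMem_erase r _ ((Finset.mem_powersetCard.mp hT).1 h)
      rw [← Finset.erase_insert hrS, ← Finset.erase_insert hrT, hST]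
    rw [Finset.sum_image hinj, Finset.mul_sum]
    refine Finset.sum_congr rfl fun S hS => ?_
    have hrS : r ∉ S := fun h =>
      Finset.notMem_erase r _ ((Finset.mem_powersetCard.mp hS).1 h)
    rw [Finset.prod_insert hrS]
    simp only [Function.update_self]
    congr 1
    refine Finset.prod_congr rfl fun j hj => ?_
    have hr : j ≠ r := by rintro rfl; exact hrS hj
    exact Function.update_of_ne hr t lam

lemma pderiv_vieta (n : ℕ) (lam : Fin n → ℝ) (r : Fin n) (i : Fin n) :
    pderiv' n (fun l => vieta n l i) r lam
      = (-1 : ℝ) ^ ((i : ℕ) + 1) *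
        ∑ S ∈ (Finset.univ.erase r).powersetCard (i : ℕ), ∏ j ∈ S, lam j := by
  unfold pderiv' vieta
  have : (fun t => (-1 : ℝ) ^ ((i : ℕ) + 1) *
      ∑ S ∈ (Finset.univ : Finset (Fin n)).powersetCard ((i : ℕ) + 1),
        ∏ j ∈ S, Function.update lam r t j)
      = fun t => (-1 : ℝ) ^ ((i : ℕ) + 1) *
        ((∑ S ∈ (Finset.univ.erase r).powersetCard ((i : ℕ) + 1), ∏ j ∈ S, lam j)
          + t * ∑ S ∈ (Finset.univ.erase r).powersetCard (i : ℕ), ∏ j ∈ S, lam j) := by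
    funext t; rw [sum_prod_update]
  rw [this]
  simp [mul_comm]

/-- For all `r, s` and all `λ ∈ ℝ^n`:
`∑_{i=1}^n (∂q_i/∂λ_r)(λ) · λ_s^{n−i} = −δ_{rs} · ∏_{j≠r}(λ_r − λ_j)`. -/
theorem viete_vandermonde_inverse (n : ℕ) (hn : 1 ≤ n) (lam : Fin n → ℝ) (r s : Fin n) :
    ∑ i : Fin n, pderiv' n (fun l => vieta n l i) r lam * lam s ^ (n - 1 - (i : ℕ))
      = -(if r = s then (1 : ℝ) else 0) * Delta n lam r := by
  have hcard : (Finset.univ.erase r).card = n - 1 := by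
    rw [Finset.card_erase_of_mem (Finset.mem_univ r), Finset.card_univ, Fintype.card_fin]
  have hp := prod_sub_eq_sum_esymm (Finset.univ.erase r) lam (lam s)
  rw [hcard, Nat.sub_add_cancel hn] at hp
  have key : ∑ i : Fin n, pderiv' n (fun l => vieta n l i) r lam * lam s ^ (n - 1 - (i : ℕ))
      = -∏ j ∈ Finset.univ.erase r, (lam s - lam j) := by
    calc ∑ i : Fin n, pderiv' n (fun l => vieta n l i) r lam * lam s ^ (n - 1 - (i : ℕ))
        = ∑ i : Fin n, -((-1 : ℝ) ^ (i : ℕ) *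
            (∑ S ∈ (Finset.univ.erase r).powersetCard (i : ℕ), ∏ j ∈ S, lam j)
            * lam s ^ (n - 1 - (i : ℕ))) := by
          refine Finset.sum_congr rfl fun i _ => ?_
          rw [pderiv_vieta]; ring
      _ = -∑ k ∈ Finset.range n, (-1 : ℝ) ^ k *
            (∑ S ∈ (Finset.univ.erase r).powersetCard k, ∏ j ∈ S, lam j)
            * lam s ^ (n - 1 - k) := by
          rw [← Finset.sum_neg_distrib]
          exact Fin.sum_univ_eq_sum_range
            (fun k => -((-1 : ℝ) ^ k *
              (∑ S ∈ (Finset.univ.erase r).powersetCard k, ∏ j ∈ S, lam j)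
              * lam s ^ (n - 1 - k))) n
      _ = -∏ j ∈ Finset.univ.erase r, (lam s - lam j) := by rw [← hp]
  rw [key]
  by_cases hrs : r = s
  · subst hrs; simp [Delta]
  · have hs : s ∈ Finset.univ.erase r :=
      Finset.mem_erase.mpr ⟨fun h => hrs h.symm, Finset.mem_univ s⟩
    rw [Finset.prod_eq_zero hs (sub_self (lam s))]
    simp [hrs]
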